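/- Let (R, m) be a Noetherian local ring of prime characteristic p > 0. Let I ⊆ J be two ideals of R with I m-primary (J = R is allowed). Then for every q = p^e, λ(R/I^{[q]}) ≤ λ(J/I) · λ(R/m^{[q]}) + λ(R/J^{[q]}), where λ(J/I) denotes the (finite) length of the R-module J/I, and λ(R/J^{[q]}) is interpreted as 0 when J^{[q]} = R. -/

import Mathlib

open IsLocalRing Filter

/-- The length of the `R`-module `M`: the height of `⊤` in the lattice of submodules. -/
noncomputable def moduleLength (R M : Type*) [CommRing R] [AddCommGroup M] [Module R M] : ℕ∞ :=
  Order.height (⊤ : Submodule R M)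

/-- λ(R/I), the length of `R/I`, as an extended natural number. -/
noncomputable def colength {R : Type*} [CommRing R] (I : Ideal R) : ℕ∞ :=
  moduleLength R (R ⧸ I)

/-- λ(R/I) as a natural number (equal to the length when the length is finite). -/
noncomputable def colengthNat {R : Type*} [CommRing R] (I : Ideal R) : ℕ :=
  (colength I).toNat

/-- The Frobenius power `I^{[q]}`, generated by the `q`-th powers of elements of `I`. -/
def frobPow {R : Type*} [CommRing R] (I : Ideal R) (q : ℕ) : Ideal R :=
  Ideal.span ((fun x => x ^ q) '' (I : Set R))

/-- A local ring is regular if its maximal ideal is generated by `dim R` elements. -/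
def IsRegularLocal (R : Type*) [CommRing R] [IsLocalRing R] : Prop :=
  ∃ s : Finset R, Ideal.span (s : Set R) = maximalIdeal R ∧ (s.card : WithBot ℕ∞) = ringKrullDim R

/-- λ(J/I), the length of the `R`-module `J/I`. -/
noncomputable def relLength {R : Type*} [CommRing R] (I J : Ideal R) : ℕ∞ :=
  moduleLength R (J ⧸ Submodule.comap J.subtype (I : Submodule R R))

/-- The height of an ideal: the infimum of the heights (in the poset of prime ideals)
of the primes minimal over it. -/
noncomputable def idealHeight {R : Type*} [CommRing R] (J : Ideal R) : ℕ∞ :=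
  ⨅ P : {P : PrimeSpectrum R // P.asIdeal ∈ J.minimalPrimes}, Order.height P.1

section Aux

variable {R M M' : Type*} [CommRing R] [AddCommGroup M] [Module R M]
  [AddCommGroup M'] [Module R M']

lemma height_add_one_le {α : Type*} [Preorder α] {x y : α} (hxy : x < y) :
    Order.height x + 1 ≤ Order.height y := by
  by_cases h : Order.height x = ⊤
  · have : Order.height y = ⊤ := top_le_iff.mp (h ▸ Order.height_mono hxy.le)
    simp [h, this]
  · exact (ENat.add_one_le_iff h).mpr (Order.height_strictMono hxy (lt_top_iff_ne_top.mpr h))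

lemma ltseries_prod_le {α β : Type*} [PartialOrder α] [PartialOrder β]
    (p : LTSeries (α × β)) : (p.length : ℕ∞) ≤ Order.height p.last.1 + Order.height p.last.2 := by
  suffices H : ∀ (n : ℕ) (p : LTSeries (α × β)), p.length = n →
      (p.length : ℕ∞) ≤ Order.height p.last.1 + Order.height p.last.2 from H p.length p rfl
  intro n
  induction n with
  | zero => intro p hn; simp [hn]
  | succ n ih =>
    intro p hn
    have hne : p.length ≠ 0 := by omega
    have hlt : p.eraseLast.last < p.last := p.eraseLast_last_rel_last hne
    have hlen : p.eraseLast.length = n := by simp [RelSeries.eraseLast, hn]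
    have IH := ih p.eraseLast hlen
    rcases Prod.lt_iff.mp hlt with ⟨h1, h2⟩ | ⟨h1, h2⟩
    · calc ((p.length : ℕ∞)) = (n : ℕ∞) + 1 := by rw [hn]; push_cast; ring
        _ ≤ (Order.height p.eraseLast.last.1 + Order.height p.eraseLast.last.2) + 1 := by
            rw [← hlen]; exact add_le_add_left IH 1
        _ = (Order.height p.eraseLast.last.1 + 1) + Order.height p.eraseLast.last.2 := by ring
        _ ≤ Order.height p.last.1 + Order.height p.last.2 :=
            add_le_add (height_add_one_le h1) (Order.height_mono h2)
    · calc ((p.length : ℕ∞)) = (n : ℕ∞) + 1 := by rw [hn]; push_cast; ring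
        _ ≤ (Order.height p.eraseLast.last.1 + Order.height p.eraseLast.last.2) + 1 := by
            rw [← hlen]; exact add_le_add_left IH 1
        _ = Order.height p.eraseLast.last.1 + (Order.height p.eraseLast.last.2 + 1) := by ring
        _ ≤ Order.height p.last.1 + Order.height p.last.2 :=
            add_le_add (Order.height_mono h1) (height_add_one_le h2)

lemma height_prod_le {α β : Type*} [PartialOrder α] [PartialOrder β] (a : α) (b : β) :
    Order.height ((a, b) : α × β) ≤ Order.height a + Order.height b := by
  apply Order.height_le
  intro p hp
  simpa [hp] using ltseries_prod_le p

/-- length of M' ≤ length of M when there is a surjection M → M'. -/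
lemma moduleLength_le_of_surjective (f : M →ₗ[R] M') (hf : Function.Surjective f) :
    moduleLength R M' ≤ moduleLength R M := by
  have h := Order.height_le_height_apply_of_strictMono (Submodule.comap f)
    (Submodule.comap_strictMono_of_surjective hf) ⊤
  simpa [moduleLength, Submodule.comap_top] using h

/-- subadditivity: len M ≤ len N + len (M/N). -/
lemma moduleLength_le_add (N : Submodule R M) :
    moduleLength R M ≤ moduleLength R N + moduleLength R (M ⧸ N) := by
  have hF : StrictMono (fun s : Submodule R M =>
      ((Submodule.comap N.subtype s, Submodule.map N.mkQ s) :
        Submodule R N × Submodule R (M ⧸ N))) := by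
    intro s t hst
    refine lt_of_le_of_ne
      (Prod.mk_le_mk.mpr ⟨Submodule.comap_mono hst.le, Submodule.map_mono hst.le⟩) ?_
    intro h
    have h1 : Submodule.comap N.subtype s = Submodule.comap N.subtype t := congrArg Prod.fst h
    have h2 : Submodule.map N.mkQ s = Submodule.map N.mkQ t := congrArg Prod.snd h
    have hinf : t ⊓ N ≤ s ⊓ N := by
      have := congrArg (Submodule.map N.subtype) h1
      rw [Submodule.map_comap_subtype, Submodule.map_comap_subtype] at this
      rw [inf_comm t N, inf_comm s N, this]
    have hsup : s ⊔ N = t ⊔ N := by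
      have := congrArg (Submodule.comap N.mkQ) h2
      rw [Submodule.comap_map_mkQ, Submodule.comap_map_mkQ] at this
      rw [sup_comm s N, sup_comm t N, this]
    exact absurd hsup (ne_of_lt (sup_lt_sup_of_lt_of_inf_le_inf hst hinf))
  apply Order.height_le
  intro p hp
  have := Order.length_le_height_last (p := p.map _ hF)
  simp only [LTSeries.last_map, hp] at this
  calc (p.length : ℕ∞) = ((p.map _ hF).length : ℕ∞) := rfl
    _ ≤ Order.height ((Submodule.comap N.subtype ⊤, Submodule.map N.mkQ ⊤) :
        Submodule R N × Submodule R (M ⧸ N)) := this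
    _ ≤ moduleLength R N + moduleLength R (M ⧸ N) := by
        rw [Submodule.comap_top, Submodule.map_top, Submodule.range_mkQ]
        exact height_prod_le _ _

/-- If there is a surjection f : M → M' with nontrivial kernel, lengths drop. -/
lemma moduleLength_succ_le (f : M →ₗ[R] M') (hf : Function.Surjective f)
    {y : M} (hy : y ≠ 0) (hfy : f y = 0) {n : ℕ} (h : moduleLength R M ≤ (n : ℕ∞) + 1) :
    moduleLength R M' ≤ n := by
  apply Order.height_le
  intro p hp
  have hcm : StrictMono (Submodule.comap f) := Submodule.comap_strictMono_of_surjective hf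
  set q := p.map _ hcm with hq
  have hbot : (⊥ : Submodule R M) < q.head := by
    refine bot_lt_iff_ne_bot.mpr ?_
    intro hb
    apply hy
    have : y ∈ q.head := by
      show y ∈ Submodule.comap f p.head
      simp [Submodule.mem_comap, hfy]
    rw [hb] at this
    simpa using this
  set c := q.cons ⊥ hbot
  have hclast : c.last = ⊤ := by
    rw [RelSeries.last_cons]
    show Submodule.comap f p.last = ⊤
    rw [hp, Submodule.comap_top]
  have := Order.length_le_height_last (p := c)
  rw [hclast] at this
  have hlen : (c.length : ℕ∞) = p.length + 1 := by simp [c, hq]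
  have : ((p.length : ℕ∞) + 1) ≤ (n : ℕ∞) + 1 := by
    rw [← hlen]
    exact le_trans this h
  have hle : (p.length : ℕ∞) ≤ (n : ℕ∞) := by
    exact (WithTop.add_le_add_iff_right ENat.one_ne_top).mp this
  exact hle

end Aux

section Ideals
variable {R : Type*} [CommRing R]

lemma colength_le_add (A B : Ideal R) (hAB : A ≤ B) :
    colength A ≤ relLength A B + colength B := by
  set N : Submodule R (R ⧸ A) := Submodule.map A.mkQ (B : Submodule R R) with hN
  have h1 : colength A ≤ moduleLength R N + moduleLength R ((R ⧸ A) ⧸ N) :=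
    moduleLength_le_add N
  have h2 : moduleLength R N ≤ relLength A B := by
    refine moduleLength_le_of_surjective
      (Submodule.liftQ _ (LinearMap.codRestrict N (A.mkQ ∘ₗ (B : Submodule R R).subtype)
        (fun b => Submodule.mem_map_of_mem b.2)) ?_) ?_
    · intro b hb
      simp only [LinearMap.mem_ker]
      ext
      simp only [LinearMap.codRestrict_apply, LinearMap.comp_apply, Submodule.subtype_apply,
        Submodule.mkQ_apply, Submodule.coe_zero]
      rw [Submodule.Quotient.mk_eq_zero]
      exact hb
    · rintro ⟨z, hz⟩
      obtain ⟨b, hb, hbz⟩ := Submodule.mem_map.mp hz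
      refine ⟨Submodule.Quotient.mk ⟨b, hb⟩, ?_⟩
      rw [Submodule.liftQ_apply]
      ext
      simpa using hbz
  have h3 : moduleLength R ((R ⧸ A) ⧸ N) ≤ colength B := by
    refine moduleLength_le_of_surjective
      (Submodule.liftQ (B : Submodule R R) (N.mkQ ∘ₗ A.mkQ) ?_) ?_
    · intro b hb
      simp only [LinearMap.mem_ker, LinearMap.comp_apply, Submodule.mkQ_apply]
      rw [Submodule.Quotient.mk_eq_zero]
      exact Submodule.mem_map_of_mem hb
    · intro z
      obtain ⟨w, rfl⟩ := N.mkQ_surjective z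
      obtain ⟨r, rfl⟩ := A.mkQ_surjective w
      exact ⟨Submodule.Quotient.mk r, by rw [Submodule.liftQ_apply]; rfl⟩
  calc colength A ≤ moduleLength R N + moduleLength R ((R ⧸ A) ⧸ N) := h1
    _ ≤ relLength A B + colength B := add_le_add h2 h3

lemma relLength_cyclic_le (A C : Ideal R) (x : R) (hx : ∀ c ∈ C, c * x ∈ A) :
    relLength A (A ⊔ Ideal.span {x}) ≤ colength C := by
  set K : Ideal R := A ⊔ Ideal.span {x} with hK
  have hxK : x ∈ K := Submodule.mem_sup_right (Ideal.mem_span_singleton_self x)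
  set cA := Submodule.comap (K : Submodule R R).subtype (A : Submodule R R) with hcA
  refine moduleLength_le_of_surjective
    (Submodule.liftQ (C : Submodule R R)
      (cA.mkQ ∘ₗ LinearMap.toSpanSingleton R K ⟨x, hxK⟩) ?_) ?_
  · intro c hc
    simp only [LinearMap.mem_ker, LinearMap.comp_apply, LinearMap.toSpanSingleton_apply,
      Submodule.mkQ_apply]
    rw [Submodule.Quotient.mk_eq_zero]
    show (c • (⟨x, hxK⟩ : K) : K).1 ∈ (A : Submodule R R)
    simpa [smul_eq_mul] using hx c hc
  · intro z
    obtain ⟨w, rfl⟩ := cA.mkQ_surjective z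
    have hw : (w : R) ∈ A ⊔ Ideal.span {x} := by rw [← hK]; exact w.2
    obtain ⟨a, ha, s, hs, haw⟩ := Submodule.mem_sup.mp hw
    obtain ⟨r, hr⟩ := Ideal.mem_span_singleton'.mp hs
    refine ⟨Submodule.Quotient.mk r, ?_⟩
    rw [Submodule.liftQ_apply]
    simp only [LinearMap.comp_apply, LinearMap.toSpanSingleton_apply, Submodule.mkQ_apply]
    rw [Submodule.Quotient.eq]
    show ((r • (⟨x, hxK⟩ : K) : K) - w : K).1 ∈ (A : Submodule R R)
    have h2 : ((r • (⟨x, hxK⟩ : K) : K) - w : K).1 = r * x - (w : R) := rfl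
    have h3 : r * x - (w : R) = -a := by rw [hr, ← haw]; ring
    rw [h2, h3]
    exact A.neg_mem ha

lemma relLength_step (I K J : Ideal R) (hIK : I ≤ K) (hKJ : K ≤ J)
    (x : R) (hxJ : x ∈ J) (hxK : x ∈ K) (hxI : x ∉ I) (n : ℕ)
    (h : relLength I J ≤ (n : ℕ∞) + 1) : relLength K J ≤ n := by
  set cI := Submodule.comap (J : Submodule R R).subtype (I : Submodule R R)
  set cK := Submodule.comap (J : Submodule R R).subtype (K : Submodule R R)
  have hc : cI ≤ cK := Submodule.comap_mono hIK
  have hcond : cI ≤ Submodule.comap LinearMap.id cK := by simpa using hc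
  refine moduleLength_succ_le (Submodule.mapQ cI cK LinearMap.id hcond) ?_
    (y := Submodule.Quotient.mk (⟨x, hxJ⟩ : J)) ?_ ?_ h
  · intro z
    obtain ⟨w, rfl⟩ := cK.mkQ_surjective z
    exact ⟨Submodule.Quotient.mk w, by rw [Submodule.mapQ_apply]; rfl⟩
  · rw [Ne, Submodule.Quotient.mk_eq_zero]
    exact hxI
  · rw [Submodule.mapQ_apply, Submodule.Quotient.mk_eq_zero]
    exact hxK

lemma le_of_relLength_eq_zero (I J : Ideal R) (h : relLength I J ≤ 0) : J ≤ I := by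
  have h0 : Order.height (⊤ : Submodule R (J ⧸ Submodule.comap (J : Submodule R R).subtype
      (I : Submodule R R))) = 0 := le_antisymm h zero_le
  rw [Order.height_eq_zero] at h0
  have htb : (⊤ : Submodule R (J ⧸ Submodule.comap (J : Submodule R R).subtype
      (I : Submodule R R))) = ⊥ := le_antisymm (h0 bot_le) bot_le
  intro j hj
  have hz := htb ▸ Submodule.mem_top
    (x := Submodule.Quotient.mk (⟨j, hj⟩ : J) (p := Submodule.comap (J : Submodule R R).subtype (I : Submodule R R)))
  rw [Submodule.mem_bot, Submodule.Quotient.mk_eq_zero] at hz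
  exact hz

lemma colength_ne_zero (C : Ideal R) (hC : C ≠ ⊤) : colength C ≠ 0 := by
  intro h
  rw [colength, moduleLength, Order.height_eq_zero] at h
  have htb : (⊤ : Submodule R (R ⧸ C)) = ⊥ := le_antisymm (h bot_le) bot_le
  have : Subsingleton (R ⧸ C) := by
    refine subsingleton_of_forall_eq 0 fun z => ?_
    have := htb ▸ Submodule.mem_top (x := z)
    rwa [Submodule.mem_bot] at this
  exact hC (Submodule.Quotient.subsingleton_iff.mp this)

end Ideals

lemma frobPow_eq_map {R : Type*} [CommRing R] (p : ℕ) [ExpChar R p] (I : Ideal R) (e : ℕ) :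
    frobPow I (p ^ e) = Ideal.map (iterateFrobenius R p e) I := by
  have himg : (fun x : R => x ^ p ^ e) '' I = (iterateFrobenius R p e) '' I :=
    Set.image_congr fun x _ => (iterateFrobenius_def p e x).symm
  simp only [frobPow, Ideal.map, himg]

/-- Let `(R, m)` be a Noetherian local ring of prime characteristic `p > 0` and let
`I ⊆ J` be ideals with `I` `m`-primary (`J = R` allowed). Then for every `q = p^e`,
`λ(R/I^{[q]}) ≤ λ(J/I) · λ(R/m^{[q]}) + λ(R/J^{[q]})`. -/
theorem stmt_4 (R : Type*) [CommRing R] [IsNoetherianRing R] [IsLocalRing R]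
    (p : ℕ) (hp : p.Prime) [CharP R p]
    (I J : Ideal R) (hIJ : I ≤ J) (hI : I.radical = maximalIdeal R) :
    ∀ e : ℕ,
      colength (frobPow I (p ^ e)) ≤
        relLength I J * colength (frobPow (maximalIdeal R) (p ^ e)) +
          colength (frobPow J (p ^ e)) := by
  haveI : ExpChar R p := ExpChar.prime hp
  intro e
  set m : Ideal R := maximalIdeal R with hm
  set f : R →+* R := iterateFrobenius R p e with hf
  rw [frobPow_eq_map, frobPow_eq_map, frobPow_eq_map]
  rw [← hf]
  have hmq_le : Ideal.map f m ≤ m := by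
    rw [Ideal.map_le_iff_le_comap]
    intro a ha
    show f a ∈ m
    rw [hf, iterateFrobenius_def]
    exact Ideal.pow_mem_of_mem m ha _ (pow_pos hp.pos e)
  have hm_ne_top : m ≠ ⊤ := (maximalIdeal.isMaximal R).ne_top
  have hc0 : colength (Ideal.map f m) ≠ 0 := by
    apply colength_ne_zero
    intro h
    exact hm_ne_top (top_le_iff.mp (h ▸ hmq_le))
  obtain ⟨k, hk⟩ := Ideal.exists_radical_pow_le_of_fg I (IsNoetherian.noetherian _)
  rw [hI] at hk
  have aux : ∀ n : ℕ, ∀ I' : Ideal R, I' ≤ J → m ^ k ≤ I' → relLength I' J ≤ (n : ℕ∞) →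
      colength (Ideal.map f I') ≤
        (n : ℕ∞) * colength (Ideal.map f m) + colength (Ideal.map f J) := by
    intro n
    induction n with
    | zero =>
      intro I' hI'J hkI' hrel
      have hJI : J ≤ I' := le_of_relLength_eq_zero I' J (by simpa using hrel)
      rw [le_antisymm hI'J hJI]
      simp
    | succ n ih =>
      intro I' hI'J hkI' hrel
      by_cases hJI : J ≤ I'
      · rw [le_antisymm hI'J hJI]
        exact le_add_self
      · classical
        have hex : ∃ t : ℕ, m ^ t * J ≤ I' := ⟨k, le_trans Ideal.mul_le_left hkI'⟩
        set t := Nat.find hex with ht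
        have hts : m ^ t * J ≤ I' := Nat.find_spec hex
        have ht0 : t ≠ 0 := by
          intro h0
          apply hJI
          rw [h0, pow_zero, Ideal.one_eq_top, Ideal.top_mul] at hts
          exact hts
        have htm : ¬ (m ^ (t - 1) * J ≤ I') := Nat.find_min hex (by omega)
        obtain ⟨x, hxmem, hxI'⟩ := SetLike.not_le_iff_exists.mp htm
        have hxJ : x ∈ J := Ideal.mul_le_right hxmem
        have hmx : ∀ a ∈ m, a * x ∈ I' := by
          intro a ha
          have h1 : a * x ∈ m * (m ^ (t - 1) * J) := Ideal.mul_mem_mul ha hxmem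
          have h2 : m * (m ^ (t - 1) * J) = m ^ t * J := by
            rw [← mul_assoc, ← pow_succ', (by omega : t - 1 + 1 = t)]
          exact hts (h2 ▸ h1)
        set K : Ideal R := I' ⊔ Ideal.span {x} with hK
        have hKJ : K ≤ J := sup_le hI'J ((Ideal.span_singleton_le_iff_mem J).mpr hxJ)
        have hI'K : I' ≤ K := le_sup_left
        have hxK : x ∈ K := Submodule.mem_sup_right (Ideal.mem_span_singleton_self x)
        have hrelK : relLength K J ≤ (n : ℕ∞) :=
          relLength_step I' K J hI'K hKJ x hxJ hxK hxI' n (by push_cast at hrel ⊢; exact hrel)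
        have hIH := ih K hKJ (le_trans hkI' hI'K) hrelK
        have hmapK : Ideal.map f K = Ideal.map f I' ⊔ Ideal.span {f x} := by
          rw [hK, Ideal.map_sup, Ideal.map_span, Set.image_singleton]
        have hincl : Ideal.map f m * Ideal.span {f x} ≤ Ideal.map f I' := by
          have h1 : m * Ideal.span {x} ≤ I' := by
            rw [Ideal.mul_le]
            intro r hr s hs
            obtain ⟨c', hc'⟩ := Ideal.mem_span_singleton'.mp hs
            rw [← hc', (by ring : r * (c' * x) = c' * (r * x))]
            exact Ideal.mul_mem_left _ _ (hmx r hr)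
          calc Ideal.map f m * Ideal.span {f x}
              = Ideal.map f (m * Ideal.span {x}) := by
                rw [Ideal.map_mul, Ideal.map_span, Set.image_singleton]
            _ ≤ Ideal.map f I' := Ideal.map_mono h1
        have hcyc : relLength (Ideal.map f I') (Ideal.map f K) ≤ colength (Ideal.map f m) := by
          rw [hmapK]
          apply relLength_cyclic_le
          intro c hc
          exact hincl (Ideal.mul_mem_mul hc (Ideal.mem_span_singleton_self _))
        have hdec := colength_le_add (Ideal.map f I') (Ideal.map f K) (Ideal.map_mono hI'K)
        calc colength (Ideal.map f I')
            ≤ relLength (Ideal.map f I') (Ideal.map f K) + colength (Ideal.map f K) := hdec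
          _ ≤ colength (Ideal.map f m) +
              ((n : ℕ∞) * colength (Ideal.map f m) + colength (Ideal.map f J)) :=
                add_le_add hcyc hIH
          _ = ((n + 1 : ℕ) : ℕ∞) * colength (Ideal.map f m) + colength (Ideal.map f J) := by
                push_cast; ring
  rcases hR : relLength I J with _ | n
  · have hgoal : colength (Ideal.map f I) ≤
        (⊤ : ℕ∞) * colength (Ideal.map f m) + colength (Ideal.map f J) := by
      rw [ENat.top_mul hc0]
      simp
    exact hgoal
  · have hle : relLength I J ≤ (n : ℕ∞) := by rw [hR]; exact_mod_cast le_refl _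
    have h2 := aux n I hIJ hk hle
    rw [(by exact_mod_cast rfl : (Option.some n : ℕ∞) = (n : ℕ∞))]
    exact h2
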